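/- arXiv:2009.10788 — 4 statements merged into one kernel-verified Lean document; each statement's English description precedes it below -/
import Mathlib

section
/- Let m ≥ 1 and let α = (α_1,…,α_m) be a vector of positive real numbers. Then the Lebesgue integral of the monomial ∏_{j=1}^m x_j^{α_j} over the set {x ∈ ℝ^m : x_j > 0 for all j and ∑_{j=1}^m x_j^2 < 1} equals (∏_{j=1}^m Γ((α_j+1)/2)) / (Γ(∑_{j=1}^m (α_j+1)/2) · 2^m · ∑_{j=1}^m (α_j+1)/2). -/
open MeasureTheory Real Set
open scoped ENNReal


lemma lint_exp (a : ℝ) : ∫⁻ t in Ioi a, ENNReal.ofReal (exp (-t)) = ENNReal.ofReal (exp (-a)) := by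
  have h1 : IntegrableOn (fun x => exp (-x)) (Ioi a) := by
    have := exp_neg_integrableOn_Ioi a one_pos
    simpa using this
  rw [← ofReal_integral_eq_lintegral_ofReal h1
    (Filter.Eventually.of_forall fun x => (exp_pos _).le), integral_exp_neg_Ioi]

variable {m : ℕ} (α : Fin m → ℝ)

noncomputable def phi (α : Fin m → ℝ) : (Fin m → ℝ) → ℝ≥0∞ :=
  Set.indicator {x | ∀ j, 0 < x j} (fun x => ENNReal.ofReal (∏ j, (x j) ^ (α j)))

def Q (x : Fin m → ℝ) : ℝ := ∑ j, (x j) ^ 2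

lemma measurable_Q : Measurable (Q (m := m)) :=
  Finset.measurable_sum _ fun j _ => ((measurable_pi_apply j).pow_const 2)

lemma measurableSet_pos : MeasurableSet {x : Fin m → ℝ | ∀ j, 0 < x j} := by
  have : {x : Fin m → ℝ | ∀ j, 0 < x j} = ⋂ j, (fun x : Fin m → ℝ => x j) ⁻¹' (Ioi 0) := by
    ext x; simp [Set.mem_iInter]
  rw [this]
  exact MeasurableSet.iInter fun j => (measurable_pi_apply j) measurableSet_Ioi

lemma measurable_prod_rpow (hα : ∀ j, 0 ≤ α j) :
    Measurable (fun x : Fin m → ℝ => ∏ j, (x j) ^ (α j)) :=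
  Finset.measurable_prod _ fun j _ =>
    (Real.continuous_rpow_const (hα j)).measurable.comp (measurable_pi_apply j)

lemma measurable_phi (hα : ∀ j, 0 ≤ α j) : Measurable (phi α) :=
  ((measurable_prod_rpow α hα).ennreal_ofReal).indicator measurableSet_pos

noncomputable def M (α : Fin m → ℝ) (t : ℝ) : ℝ≥0∞ :=
  ∫⁻ x, Set.indicator {x : Fin m → ℝ | Q x < t} (phi α) x

lemma measurableSet_Qlt (t : ℝ) : MeasurableSet {x : Fin m → ℝ | Q x < t} :=
  measurable_Q measurableSet_Iio

lemma phi_smul (hα : ∀ j, 0 ≤ α j) {r : ℝ} (hr : 0 < r) (x : Fin m → ℝ) :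
    phi α (r • x) = ENNReal.ofReal (r ^ (∑ j, α j)) * phi α x := by
  unfold phi
  have hmem : (r • x) ∈ {x : Fin m → ℝ | ∀ j, 0 < x j} ↔ x ∈ {x : Fin m → ℝ | ∀ j, 0 < x j} := by
    simp only [Set.mem_setOf_eq, Pi.smul_apply, smul_eq_mul]
    exact forall_congr' fun j => ⟨fun h => by nlinarith, fun h => mul_pos hr h⟩
  by_cases h : x ∈ {x : Fin m → ℝ | ∀ j, 0 < x j}
  · rw [Set.indicator_of_mem (hmem.mpr h), Set.indicator_of_mem h]
    rw [← ENNReal.ofReal_mul (by positivity)]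
    congr 1
    rw [Real.rpow_sum_of_pos hr, ← Finset.prod_mul_distrib]
    refine Finset.prod_congr rfl fun j _ => ?_
    show ((r • x) j) ^ α j = r ^ α j * x j ^ α j
    rw [Pi.smul_apply, smul_eq_mul, Real.mul_rpow hr.le (h j).le]
  · rw [Set.indicator_of_notMem (fun hc => h (hmem.mp hc)), Set.indicator_of_notMem h, mul_zero]

lemma Q_smul (r : ℝ) (x : Fin m → ℝ) : Q (r • x) = r ^ 2 * Q x := by
  unfold Q
  rw [Finset.mul_sum]
  refine Finset.sum_congr rfl fun j _ => ?_
  show ((r • x) j) ^ 2 = _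
  rw [Pi.smul_apply, smul_eq_mul]; ring

lemma M_scale (hα : ∀ j, 0 ≤ α j) {t : ℝ} (ht : 0 < t) :
    M α t = ENNReal.ofReal (t ^ (((m : ℝ) + ∑ j, α j) / 2)) * M α 1 := by
  set r := Real.sqrt t with hrdef
  have hr : 0 < r := Real.sqrt_pos.mpr ht
  set F := Set.indicator {x : Fin m → ℝ | Q x < t} (phi α) with hF
  have hFm : Measurable F := (measurable_phi α hα).indicator (measurableSet_Qlt t)
  have h1 : ∫⁻ x, F (r • x) = ENNReal.ofReal |(r ^ m)⁻¹| * ∫⁻ x, F x := by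
    rw [← lintegral_map hFm (measurable_const_smul r)]
    rw [MeasureTheory.Measure.map_addHaar_smul volume hr.ne']
    simp only [Module.finrank_pi, Fintype.card_fin]
    rw [lintegral_smul_measure, smul_eq_mul]
  have h2 : ∀ x, F (r • x)
      = ENNReal.ofReal (r ^ (∑ j, α j)) * Set.indicator {x : Fin m → ℝ | Q x < 1} (phi α) x := by
    intro x
    have hQ : (r • x) ∈ {x : Fin m → ℝ | Q x < t} ↔ x ∈ {x : Fin m → ℝ | Q x < 1} := by
      simp only [Set.mem_setOf_eq, Q_smul, hrdef, Real.sq_sqrt ht.le]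
      rw [mul_lt_iff_lt_one_right ht]
    by_cases h : x ∈ {x : Fin m → ℝ | Q x < 1}
    · rw [hF, Set.indicator_of_mem (hQ.mpr h), Set.indicator_of_mem h, phi_smul α hα hr]
    · rw [hF, Set.indicator_of_notMem (fun hc => h (hQ.mp hc)), Set.indicator_of_notMem h,
        mul_zero]
  have h3 : ENNReal.ofReal |(r ^ m)⁻¹| * M α t = ENNReal.ofReal (r ^ (∑ j, α j)) * M α 1 := by
    rw [M, ← h1]
    simp_rw [h2]
    rw [lintegral_const_mul _ ((measurable_phi α hα).indicator (measurableSet_Qlt 1))]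
    rfl
  have hrm : (0:ℝ) < r ^ m := by positivity
  have hcancel : ENNReal.ofReal (r ^ m) * ENNReal.ofReal |(r ^ m)⁻¹| = 1 := by
    rw [abs_inv, abs_of_pos hrm, ← ENNReal.ofReal_mul hrm.le, mul_inv_cancel₀ hrm.ne',
      ENNReal.ofReal_one]
  have := congrArg (fun z => ENNReal.ofReal (r ^ m) * z) h3
  simp only [← mul_assoc, hcancel, one_mul] at this
  rw [this, ← ENNReal.ofReal_mul hrm.le]
  congr 2
  rw [hrdef, Real.sqrt_eq_rpow, ← Real.rpow_natCast (t ^ (1/2 : ℝ)) m, ← Real.rpow_mul ht.le,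
  ]
  rw [← Real.rpow_mul ht.le, ← Real.rpow_add ht]
  congr 1
  ring

lemma Q_nonneg (x : Fin m → ℝ) : 0 ≤ Q x :=
  Finset.sum_nonneg fun j _ => sq_nonneg _

lemma M_zero {t : ℝ} (ht : t ≤ 0) : M α t = 0 := by
  unfold M
  have : ∀ x : Fin m → ℝ, Set.indicator {x : Fin m → ℝ | Q x < t} (phi α) x = 0 := by
    intro x
    apply Set.indicator_of_notMem
    intro hc
    exact absurd (lt_of_le_of_lt (Q_nonneg x) hc) (not_lt.mpr ht)
  simp_rw [this, lintegral_zero]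

lemma layer_cake (hα : ∀ j, 0 ≤ α j) :
    ∫⁻ x, phi α x * ENNReal.ofReal (exp (-Q x)) =
      ∫⁻ t in Ioi (0:ℝ), ENNReal.ofReal (exp (-t)) * M α t := by
  set ψ : (Fin m → ℝ) → ℝ → ℝ≥0∞ := fun x t =>
    Set.indicator {p : (Fin m → ℝ) × ℝ | Q p.1 < p.2}
      (fun p => phi α p.1 * ENNReal.ofReal (exp (-p.2))) (x, t) with hψ
  have hmeas : AEMeasurable (Function.uncurry ψ)
      ((volume : Measure (Fin m → ℝ)).prod (volume : Measure ℝ)) := by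
    refine Measurable.aemeasurable ?_
    have hset : MeasurableSet {p : (Fin m → ℝ) × ℝ | Q p.1 < p.2} :=
      measurableSet_lt (measurable_Q.comp measurable_fst) measurable_snd
    exact Measurable.indicator
      (((measurable_phi α hα).comp measurable_fst).mul
        ((measurable_snd.neg.exp).ennreal_ofReal)) hset
  have step1 : ∀ x, phi α x * ENNReal.ofReal (exp (-Q x)) = ∫⁻ t, ψ x t := by
    intro x
    have : ∀ t, ψ x t = Set.indicator (Ioi (Q x))
        (fun t => phi α x * ENNReal.ofReal (exp (-t))) t := by
      intro t
      rw [hψ]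
      simp only [Set.indicator_apply, Set.mem_setOf_eq, Set.mem_Ioi]
    simp_rw [this]
    rw [lintegral_indicator measurableSet_Ioi,
      lintegral_const_mul _ ((measurable_neg.exp).ennreal_ofReal), lint_exp]
  have step3 : ∀ t, ∫⁻ x, ψ x t
      = ENNReal.ofReal (exp (-t)) * M α t := by
    intro t
    have : ∀ x, ψ x t = ENNReal.ofReal (exp (-t)) *
        Set.indicator {x : Fin m → ℝ | Q x < t} (phi α) x := by
      intro x
      rw [hψ]
      simp only [Set.indicator_apply, Set.mem_setOf_eq]
      by_cases h : Q x < t <;> simp [h, mul_comm]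
    simp_rw [this]
    rw [lintegral_const_mul _ ((measurable_phi α hα).indicator (measurableSet_Qlt t))]
    rfl
  calc ∫⁻ x, phi α x * ENNReal.ofReal (exp (-Q x)) = ∫⁻ x, ∫⁻ t, ψ x t := by simp_rw [step1]
    _ = ∫⁻ t, ∫⁻ x, ψ x t := lintegral_lintegral_swap hmeas
    _ = ∫⁻ t, ENNReal.ofReal (exp (-t)) * M α t := by simp_rw [step3]
    _ = ∫⁻ t in Ioi (0:ℝ), ENNReal.ofReal (exp (-t)) * M α t := by
        rw [← lintegral_indicator measurableSet_Ioi]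
        refine lintegral_congr fun t => ?_
        by_cases h : t ∈ Ioi (0:ℝ)
        · rw [Set.indicator_of_mem h]
        · rw [Set.indicator_of_notMem h, M_zero α (not_lt.mp h), mul_zero]

lemma gaussian_prod (hα : ∀ j, 0 < α j) :
    ∫⁻ x : Fin m → ℝ, phi α x * ENNReal.ofReal (exp (-Q x)) =
      ENNReal.ofReal (∏ j, (Real.Gamma ((α j + 1) / 2) / 2)) := by
  set g : Fin m → ℝ → ℝ := fun j =>
    Set.indicator (Ioi (0:ℝ)) (fun y => y ^ (α j) * exp (-y ^ 2)) with hg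
  have hInt : ∀ j, Integrable (g j) := by
    intro j
    refine IntegrableOn.integrable_indicator ?_ measurableSet_Ioi
    have := integrableOn_rpow_mul_exp_neg_mul_sq one_pos (by linarith [hα j] : (-1:ℝ) < α j)
    simpa using this
  have hpt : ∀ x : Fin m → ℝ,
      phi α x * ENNReal.ofReal (exp (-Q x)) = ENNReal.ofReal (∏ j, g j (x j)) := by
    intro x
    by_cases h : ∀ j, 0 < x j
    · have hx : x ∈ {x : Fin m → ℝ | ∀ j, 0 < x j} := h
      rw [phi, Set.indicator_of_mem hx]
      have hgj : ∀ j, g j (x j) = (x j) ^ (α j) * exp (-(x j) ^ 2) := fun j =>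
        Set.indicator_of_mem (mem_Ioi.mpr (h j)) _
      have hprod : ∏ j, g j (x j) = (∏ j, (x j) ^ (α j)) * exp (-Q x) := by
        simp_rw [hgj, Finset.prod_mul_distrib, ← Real.exp_sum]
        congr 2
        rw [Q, ← Finset.sum_neg_distrib]
      rw [hprod,
        ENNReal.ofReal_mul (Finset.prod_nonneg fun j _ => Real.rpow_nonneg (h j).le _)]
    · push_neg at h
      obtain ⟨j0, hj0⟩ := h
      have hx : x ∉ {x : Fin m → ℝ | ∀ j, 0 < x j} := by
        intro hc; exact absurd (hc j0) (not_lt.mpr hj0)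
      rw [phi, Set.indicator_of_notMem hx, zero_mul]
      have hz : g j0 (x j0) = 0 := Set.indicator_of_notMem (by simpa using hj0) _
      rw [Finset.prod_eq_zero (Finset.mem_univ j0) hz, ENNReal.ofReal_zero]
  simp_rw [hpt]
  rw [volume_pi]
  rw [← ofReal_integral_eq_lintegral_ofReal (Integrable.fintype_prod hInt)
    (Filter.Eventually.of_forall fun x => Finset.prod_nonneg fun j _ =>
      Set.indicator_nonneg (fun y hy =>
        mul_nonneg (Real.rpow_nonneg (mem_Ioi.mp hy).le _) (exp_pos _).le) _)]
  rw [MeasureTheory.integral_fintype_prod_eq_prod (f := g)]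
  congr 1
  refine Finset.prod_congr rfl fun j _ => ?_
  rw [hg]
  rw [MeasureTheory.integral_indicator measurableSet_Ioi]
  have : ∫ y in Ioi (0:ℝ), y ^ (α j) * exp (-y ^ 2)
      = ∫ y in Ioi (0:ℝ), y ^ (α j) * exp (-y ^ (2:ℝ)) := by
    refine setIntegral_congr_fun measurableSet_Ioi fun y hy => ?_
    rw [Real.rpow_two]
  rw [this, integral_rpow_mul_exp_neg_rpow two_pos (by linarith [hα j])]
  ring

lemma lint_gamma {s : ℝ} (hs : 0 < s) :
    ∫⁻ t in Ioi (0:ℝ), ENNReal.ofReal (exp (-t)) * ENNReal.ofReal (t ^ s)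
      = ENNReal.ofReal (Real.Gamma (s + 1)) := by
  have hint : IntegrableOn (fun t : ℝ => exp (-t) * t ^ (s + 1 - 1)) (Ioi 0) :=
    Real.GammaIntegral_convergent (by linarith)
  rw [Real.Gamma_eq_integral (by linarith : (0:ℝ) < s + 1),
    ofReal_integral_eq_lintegral_ofReal hint
      (ae_restrict_of_forall_mem measurableSet_Ioi fun t ht =>
        mul_nonneg (exp_pos _).le (Real.rpow_nonneg (mem_Ioi.mp ht).le _))]
  refine setLIntegral_congr_fun measurableSet_Ioi (fun t ht => ?_)
  rw [← ENNReal.ofReal_mul (exp_pos _).le, add_sub_cancel_right]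

lemma M_one_eq (hm : 1 ≤ m) (hα : ∀ j, 0 < α j) :
    M α 1 = ENNReal.ofReal ((∏ j, (Real.Gamma ((α j + 1) / 2) / 2)) /
      Real.Gamma (((m : ℝ) + ∑ j, α j) / 2 + 1)) := by
  set s : ℝ := ((m : ℝ) + ∑ j, α j) / 2 with hsdef
  have hm' : (0:ℝ) < m := by exact_mod_cast hm
  have hsum : 0 ≤ ∑ j, α j := Finset.sum_nonneg fun j _ => (hα j).le
  have hs : 0 < s := by rw [hsdef]; positivity
  have hαnn : ∀ j, 0 ≤ α j := fun j => (hα j).le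
  have key : ENNReal.ofReal (Real.Gamma (s + 1)) * M α 1
      = ENNReal.ofReal (∏ j, (Real.Gamma ((α j + 1) / 2) / 2)) := by
    rw [← gaussian_prod α hα, layer_cake α hαnn]
    have : ∀ t ∈ Ioi (0:ℝ), ENNReal.ofReal (exp (-t)) * M α t
        = ENNReal.ofReal (exp (-t)) * ENNReal.ofReal (t ^ s) * M α 1 := by
      intro t ht
      rw [M_scale α hαnn (mem_Ioi.mp ht), ← mul_assoc]
    rw [setLIntegral_congr_fun measurableSet_Ioi this,
      lintegral_mul_const _ (by fun_prop), lint_gamma hs]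
  have hG : 0 < Real.Gamma (s + 1) := Real.Gamma_pos_of_pos (by linarith)
  have ha : ENNReal.ofReal (Real.Gamma (s + 1)) ≠ 0 := by
    simp [ENNReal.ofReal_eq_zero, not_le, hG]
  have ha' : ENNReal.ofReal (Real.Gamma (s + 1)) ≠ ⊤ := ENNReal.ofReal_ne_top
  rw [ENNReal.ofReal_div_of_pos hG, ← key, mul_comm,
    mul_div_assoc, ENNReal.div_self ha ha', mul_one]

/-- The integral of the monomial `∏ x_j ^ α_j` over the positive part of the
open unit ball in `ℝ^m` equals
`(∏ Γ((α_j+1)/2)) / (Γ(∑ (α_j+1)/2) · 2^m · ∑ (α_j+1)/2)`. -/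
theorem statement0 (m : ℕ) (hm : 1 ≤ m) (α : Fin m → ℝ) (hα : ∀ j, 0 < α j) :
    ∫ x in {x : Fin m → ℝ | (∀ j, 0 < x j) ∧ ∑ j, (x j) ^ 2 < 1},
        ∏ j, (x j) ^ (α j)
      = (∏ j, Real.Gamma ((α j + 1) / 2)) /
          (Real.Gamma (∑ j, (α j + 1) / 2) * 2 ^ m * ∑ j, (α j + 1) / 2) := by
  have hαnn : ∀ j, 0 ≤ α j := fun j => (hα j).le
  set S : Set (Fin m → ℝ) := {x | (∀ j, 0 < x j) ∧ ∑ j, (x j) ^ 2 < 1} with hSdef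
  have hSeq : S = {x : Fin m → ℝ | Q x < 1} ∩ {x : Fin m → ℝ | ∀ j, 0 < x j} := by
    ext x; simp [hSdef, Q, and_comm]
  have hSmeas : MeasurableSet S := by
    rw [hSeq]; exact (measurableSet_Qlt 1).inter measurableSet_pos
  -- the integral equals toReal of M α 1
  have hM : M α 1 = ∫⁻ x in S, ENNReal.ofReal (∏ j, (x j) ^ (α j)) := by
    rw [M, phi, Set.indicator_indicator,
      lintegral_indicator ((measurableSet_Qlt 1).inter measurableSet_pos), ← hSeq]
  have hI : ∫ x in S, ∏ j, (x j) ^ (α j) = (M α 1).toReal := by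
    rw [hM, integral_eq_lintegral_of_nonneg_ae]
    · exact (ae_restrict_of_forall_mem hSmeas fun x hx =>
        Finset.prod_nonneg fun j _ => Real.rpow_nonneg (hx.1 j).le _)
    · exact (measurable_prod_rpow α hαnn).aestronglyMeasurable
  rw [hI, M_one_eq α hm hα, ENNReal.toReal_ofReal]; swap
  · have hG : 0 < Real.Gamma (((m : ℝ) + ∑ j, α j) / 2 + 1) := by
      apply Real.Gamma_pos_of_pos
      have : (0:ℝ) < m := by exact_mod_cast hm
      have := Finset.sum_nonneg fun j (_ : j ∈ Finset.univ) => (hα j).le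
      positivity
    exact div_nonneg (Finset.prod_nonneg fun j _ =>
      div_nonneg (Real.Gamma_nonneg_of_nonneg (by linarith [hα j])) (by norm_num)) hG.le
  -- now pure real arithmetic
  have hssum : ∑ j, (α j + 1) / 2 = ((m : ℝ) + ∑ j, α j) / 2 := by
    rw [← Finset.sum_div, Finset.sum_add_distrib, Finset.sum_const, Finset.card_univ,
      Fintype.card_fin, nsmul_eq_mul, mul_one]
    ring_nf
  set s : ℝ := ((m : ℝ) + ∑ j, α j) / 2 with hsdef
  have hspos : 0 < s := by
    have : (0:ℝ) < m := by exact_mod_cast hm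
    have := Finset.sum_nonneg fun j (_ : j ∈ Finset.univ) => (hα j).le
    rw [hsdef]; positivity
  rw [hssum, Real.Gamma_add_one hspos.ne', Finset.prod_div_distrib, Finset.prod_const,
    Finset.card_univ, Fintype.card_fin, div_div]
  congr 1
  ring
end

section
/- Let m ≥ 1 and let p_1,…,p_m be positive real numbers. Define ω(n) := (∏_{j=1}^m Γ((n_j+1)/p_j)) / (Γ(T(n)) · T(n)) for n ∈ ℕ^m, where T(n) := ∑_{j=1}^m (n_j+1)/p_j. Fix i ∈ {1,…,m} and define λ_i(n) := ω(n)/ω(n−e_i) − ω(n+e_i)/ω(n) when n_i ≥ 1, and λ_i(n) := −ω(n+e_i)/ω(n) when n_i = 0, where e_i is the i-th standard basis vector of ℕ^m. Then λ_i(n) → 0 as ∑_{j=1}^m n_j → ∞. -/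
open Filter Real


/-- log of Gamma. -/
noncomputable def st8L (t : ℝ) : ℝ := Real.log (Real.Gamma t)

/-- log Gamma ratio: `log (Γ(t+c)/Γ(t))`. -/
noncomputable def st8F (c t : ℝ) : ℝ := st8L (t + c) - st8L t

lemma st8_slope_mono {a b u v : ℝ} (ha : 0 < a) (hu : 0 < u) (hab : a < b) (huv : u < v)
    (hau : a ≤ u) (hbv : b ≤ v) :
    (st8L b - st8L a) / (b - a) ≤ (st8L v - st8L u) / (v - u) := by
  have hconv := Real.convexOn_log_Gamma
  have hma : a ∈ Set.Ioi (0:ℝ) := ha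
  have hmb : b ∈ Set.Ioi (0:ℝ) := lt_trans ha hab
  have hmu : u ∈ Set.Ioi (0:ℝ) := hu
  have hmv : v ∈ Set.Ioi (0:ℝ) := lt_trans hu huv
  have hav : a < v := lt_of_lt_of_le hab hbv
  have h1 : (st8L b - st8L a) / (b - a) ≤ (st8L v - st8L a) / (v - a) :=
    hconv.secant_mono hma hmb hmv hab.ne' hav.ne' hbv
  have h2 : (st8L a - st8L v) / (a - v) ≤ (st8L u - st8L v) / (u - v) :=
    hconv.secant_mono hmv hma hmu hav.ne huv.ne hau
  have e1 : (st8L a - st8L v) / (a - v) = (st8L v - st8L a) / (v - a) := by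
    rw [← neg_div_neg_eq]; ring_nf
  have e2 : (st8L u - st8L v) / (u - v) = (st8L v - st8L u) / (v - u) := by
    rw [← neg_div_neg_eq]; ring_nf
  rw [e1, e2] at h2
  exact le_trans h1 h2

lemma st8L_add_one {t : ℝ} (ht : 0 < t) : st8L (t + 1) = Real.log t + st8L t := by
  unfold st8L
  rw [Real.Gamma_add_one ht.ne', Real.log_mul ht.ne' (Real.Gamma_pos_of_pos ht).ne']


lemma st8F_mono {c a b : ℝ} (hc : 0 < c) (ha : 0 < a) (hab : a ≤ b) :
    st8F c a ≤ st8F c b := by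
  rcases eq_or_lt_of_le hab with rfl | hab
  · exact le_rfl
  have hb : 0 < b := lt_trans ha hab
  have h := st8_slope_mono ha hb (by linarith : a < a + c) (by linarith : b < b + c)
    hab.le (by linarith)
  rw [show a + c - a = c by ring, show b + c - b = c by ring] at h
  have := (div_le_div_iff_of_pos_right hc).mp h
  unfold st8F; linarith

lemma st8F_lower {c t : ℝ} (hc : 0 < c) (ht : 1 < t) :
    c * Real.log (t - 1) ≤ st8F c t := by
  have h0 : (0:ℝ) < t - 1 := by linarith
  have hL : st8L t = Real.log (t-1) + st8L (t-1) := by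
    rw [← st8L_add_one h0, show t - 1 + 1 = t by ring]
  have h := st8_slope_mono h0 (by linarith : (0:ℝ) < t) (by linarith : t - 1 < t)
    (by linarith : t < t + c) (by linarith) (by linarith)
  rw [show t - (t - 1) = 1 by ring, show t + c - t = c by ring, div_one, hL] at h
  have h2 : Real.log (t-1) ≤ st8F c t / c := by
    unfold st8F; rw [hL]; linarith
  have := mul_le_mul_of_nonneg_left h2 hc.le
  rw [mul_div_cancel₀ _ hc.ne'] at this
  exact this



lemma st8F_upper {c t : ℝ} (hc : 0 < c) (ht : 0 < t) :
    st8F c t ≤ c * Real.log (t + c) := by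
  have htc : (0:ℝ) < t + c := by linarith
  have hL : st8L (t+c+1) = Real.log (t+c) + st8L (t+c) := st8L_add_one htc
  have h := st8_slope_mono ht htc (by linarith : t < t + c)
    (by linarith : t + c < t + c + 1) (by linarith) (by linarith)
  rw [show t + c - t = c by ring, show t + c + 1 - (t+c) = 1 by ring, div_one, hL] at h
  have h2 : st8F c t / c ≤ Real.log (t+c) := by unfold st8F; linarith
  have := mul_le_mul_of_nonneg_left h2 hc.le
  rw [mul_div_cancel₀ _ hc.ne'] at this
  exact this

/-- ψ bound: `st8F c (t+c) - st8F c t ≤ c*(2c+1)/(t-1)` for `t > 1`. -/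
lemma st8_psi_bound {c t : ℝ} (hc : 0 < c) (ht : 1 < t) :
    st8F c (t + c) - st8F c t ≤ c * (2*c+1) / (t - 1) := by
  have h0 : (0:ℝ) < t - 1 := by linarith
  have h1 : st8F c (t + c) ≤ c * Real.log (t + 2*c) := by
    have := st8F_upper hc (by linarith : (0:ℝ) < t + c)
    rw [show t + c + c = t + 2*c by ring] at this; exact this
  have h2 : c * Real.log (t - 1) ≤ st8F c t := st8F_lower hc ht
  have h3 : Real.log (t + 2*c) - Real.log (t - 1) = Real.log ((t + 2*c)/(t-1)) := by
    rw [Real.log_div (by linarith) h0.ne']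
  have h4 : Real.log ((t + 2*c)/(t-1)) ≤ (t + 2*c)/(t-1) - 1 :=
    Real.log_le_sub_one_of_pos (by positivity)
  have h5 : (t + 2*c)/(t-1) - 1 = (2*c+1)/(t-1) := by field_simp; ring
  have h6 : Real.log (t + 2*c) - Real.log (t-1) ≤ (2*c+1)/(t-1) := by
    rw [h3]; linarith
  calc st8F c (t+c) - st8F c t ≤ c * Real.log (t+2*c) - c * Real.log (t-1) := by linarith
    _ = c * (Real.log (t+2*c) - Real.log (t-1)) := by ring
    _ ≤ c * ((2*c+1)/(t-1)) := mul_le_mul_of_nonneg_left h6 hc.le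
    _ = c * (2*c+1)/(t-1) := by ring

lemma st8_exp_lip {u v : ℝ} (hu : u ≤ 0) (hv : v ≤ 0) :
    |Real.exp u - Real.exp v| ≤ |u - v| := by
  wlog h : v ≤ u generalizing u v
  · rw [abs_sub_comm, abs_sub_comm u v]; exact this hv hu (le_of_not_ge h)
  rw [abs_of_nonneg (by simp [Real.exp_le_exp, h] : (0:ℝ) ≤ Real.exp u - Real.exp v),
    abs_of_nonneg (by linarith)]
  have h1 : Real.exp u - Real.exp v = Real.exp u * (1 - Real.exp (v - u)) := by
    rw [mul_sub, mul_one, ← Real.exp_add]; ring_nf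
  have h2 : 1 - Real.exp (v - u) ≤ u - v := by
    have := Real.add_one_le_exp (v - u); linarith
  have h3 : Real.exp u ≤ 1 := Real.exp_le_one_iff.mpr hu
  have h4 : 0 ≤ 1 - Real.exp (v-u) := by
    have : Real.exp (v-u) ≤ 1 := Real.exp_le_one_iff.mpr (by linarith)
    linarith
  rw [h1]
  calc Real.exp u * (1 - Real.exp (v-u)) ≤ 1 * (1 - Real.exp (v-u)) :=
        mul_le_mul_of_nonneg_right h3 h4
    _ ≤ u - v := by linarith


lemma st8_ratio (m : ℕ) (p : Fin m → ℝ) (hp : ∀ j, 0 < p j)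
    (ω : (Fin m → ℕ) → ℝ)
    (hω : ∀ n : Fin m → ℕ,
      ω n = (∏ j, Real.Gamma (((n j : ℝ) + 1) / p j)) /
        (Real.Gamma (∑ j, ((n j : ℝ) + 1) / p j) * ∑ j, ((n j : ℝ) + 1) / p j))
    (i : Fin m) (n : Fin m → ℕ) :
    ω (Function.update n i (n i + 1)) / ω n
      = Real.exp (st8F (1/p i) (((n i : ℝ)+1)/p i)
          - st8F (1/p i) ((∑ j, ((n j : ℝ)+1)/p j) + 1)) := by
  set c : ℝ := 1 / p i with hc
  set x : ℝ := ((n i : ℝ)+1)/p i with hx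
  set y : ℝ := ∑ j, ((n j : ℝ)+1)/p j with hy
  have hpi := hp i
  have hcpos : 0 < c := by positivity
  have hxpos : 0 < x := by positivity
  have hypos : 0 < y := by
    exact Finset.sum_pos (fun j _ => div_pos (by positivity) (hp j)) ⟨i, Finset.mem_univ i⟩
  set G : Fin m → ℝ := fun j => Real.Gamma (((n j : ℝ)+1)/p j) with hG
  set H : Fin m → ℝ := fun j => ((n j : ℝ)+1)/p j with hH
  set n' := Function.update n i (n i + 1) with hn'
  -- coordinates of n'
  have hfun : (fun j => Real.Gamma (((n' j : ℝ)+1)/p j))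
      = Function.update G i (Real.Gamma (x + c)) := by
    funext j
    rcases eq_or_ne j i with rfl | hj
    · simp only [hn', Function.update_self, hG]
      push_cast
      rw [hx, hc]
      congr 1
      field_simp
    · simp [hn', Function.update_of_ne hj, hG]
  have hfunH : (fun j => ((n' j : ℝ)+1)/p j) = Function.update H i (x + c) := by
    funext j
    rcases eq_or_ne j i with rfl | hj
    · simp only [hn', Function.update_self, hH]
      push_cast
      rw [hx, hc]
      field_simp
    · simp [hn', Function.update_of_ne hj, hH]
  have hprod : (∏ j, Real.Gamma (((n' j : ℝ)+1)/p j))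
      = Real.Gamma (x + c) * ∏ j ∈ Finset.univ.erase i, G j := by
    rw [hfun, Finset.prod_update_of_mem (Finset.mem_univ i),
      Finset.sdiff_singleton_eq_erase]
  have hsum : (∑ j, ((n' j : ℝ)+1)/p j) = y + c := by
    rw [hfunH, Finset.sum_update_of_mem (Finset.mem_univ i),
      Finset.sdiff_singleton_eq_erase]
    have h2 : y = H i + ∑ j ∈ Finset.univ.erase i, H j :=
      (Finset.add_sum_erase _ H (Finset.mem_univ i)).symm
    have h3 : H i = x := rfl
    rw [h2, h3]; ring
  have hQ : 0 < ∏ j ∈ Finset.univ.erase i, G j :=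
    Finset.prod_pos (fun j _ => Real.Gamma_pos_of_pos (div_pos (by positivity) (hp j)))
  have hGx : 0 < Real.Gamma x := Real.Gamma_pos_of_pos hxpos
  have hGxc : 0 < Real.Gamma (x+c) := Real.Gamma_pos_of_pos (by linarith)
  have hGy : 0 < Real.Gamma y := Real.Gamma_pos_of_pos hypos
  have hGyc : 0 < Real.Gamma (y+c) := Real.Gamma_pos_of_pos (by linarith)
  have hGy1 : 0 < Real.Gamma (y+1) := Real.Gamma_pos_of_pos (by linarith)
  have hGy1c : 0 < Real.Gamma (y+1+c) := Real.Gamma_pos_of_pos (by linarith)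
  have hprodn : (∏ j, Real.Gamma (((n j : ℝ)+1)/p j))
      = Real.Gamma x * ∏ j ∈ Finset.univ.erase i, G j := by
    have h3 : G i = Real.Gamma x := rfl
    rw [← Finset.mul_prod_erase _ G (Finset.mem_univ i), h3]
  have hry : Real.Gamma (y+1) = y * Real.Gamma y := Real.Gamma_add_one hypos.ne'
  have hryc : Real.Gamma (y+1+c) = (y+c) * Real.Gamma (y+c) := by
    rw [show y+1+c = (y+c)+1 by ring, Real.Gamma_add_one (by linarith : y + c ≠ 0)]
  have hexp : Real.exp (st8F c x - st8F c (y+1))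
      = (Real.Gamma (x+c) * Real.Gamma (y+1)) / (Real.Gamma x * Real.Gamma (y+1+c)) := by
    unfold st8F st8L
    rw [Real.exp_sub, Real.exp_sub, Real.exp_sub, Real.exp_log hGxc, Real.exp_log hGx,
      Real.exp_log hGy1c, Real.exp_log hGy1]
    field_simp
  rw [hexp, hω n', hω n, hprod, hsum, hprodn, hry, hryc]
  field_simp
  ring

lemma st8_sum_update (m : ℕ) (p : Fin m → ℝ) (i : Fin m) (n : Fin m → ℕ) (v : ℕ) :
    ∑ j, ((Function.update n i v j : ℝ)+1)/p j
      = (∑ j, ((n j : ℝ)+1)/p j) - ((n i : ℝ)+1)/p i + ((v : ℝ)+1)/p i := by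
  set H : Fin m → ℝ := fun j => ((n j : ℝ)+1)/p j with hH
  have hfunH : (fun j => ((Function.update n i v j : ℝ)+1)/p j)
      = Function.update H i (((v:ℝ)+1)/p i) := by
    funext j
    rcases eq_or_ne j i with rfl | hj
    · simp [hH]
    · simp [Function.update_of_ne hj, hH]
  rw [hfunH, Finset.sum_update_of_mem (Finset.mem_univ i),
    Finset.sdiff_singleton_eq_erase]
  have h2 : ∑ j, H j = H i + ∑ j ∈ Finset.univ.erase i, H j :=
    (Finset.add_sum_erase _ H (Finset.mem_univ i)).symm
  have h3 : H i = ((n i : ℝ)+1)/p i := rfl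
  rw [h2, h3]; ring



/-- The diagonal entries `λ_i(n)` of the self-commutator `[M_{z_i}, M_{z_i}^*]` of
the Bergman shift on the egg domain, expressed through the normalized monomial
norms `ω(n) = (∏ Γ((n_j+1)/p_j)) / (Γ(T(n))·T(n))`, tend to `0` as
`∑ n_j → ∞`. -/
theorem statement8 (m : ℕ) (hm : 1 ≤ m) (p : Fin m → ℝ) (hp : ∀ j, 0 < p j)
    (ω : (Fin m → ℕ) → ℝ)
    (hω : ∀ n : Fin m → ℕ,
      ω n = (∏ j, Real.Gamma (((n j : ℝ) + 1) / p j)) /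
        (Real.Gamma (∑ j, ((n j : ℝ) + 1) / p j) * ∑ j, ((n j : ℝ) + 1) / p j))
    (i : Fin m)
    (lam : (Fin m → ℕ) → ℝ)
    (hlam0 : ∀ n : Fin m → ℕ, n i = 0 →
      lam n = -(ω (Function.update n i (n i + 1)) / ω n))
    (hlam1 : ∀ n : Fin m → ℕ, 1 ≤ n i →
      lam n = ω n / ω (Function.update n i (n i - 1))
        - ω (Function.update n i (n i + 1)) / ω n) :
    Tendsto lam (Filter.comap (fun n : Fin m → ℕ => ∑ j, n j) Filter.atTop)
      (nhds 0) := by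
  have hpi := hp i
  obtain ⟨c, hcdef⟩ : ∃ c : ℝ, c = 1 / p i := ⟨_, rfl⟩
  have hc : 0 < c := by rw [hcdef]; positivity
  have hratio := st8_ratio m p hp ω hω i
  simp only [← hcdef] at hratio
  -- the max of the p's
  obtain ⟨P, hPmem, hPmax⟩ : ∃ P ∈ Finset.univ.image p, ∀ j, p j ≤ P := by
    obtain ⟨P, hPmem, hmax⟩ := Finset.exists_max_image Finset.univ p ⟨i, Finset.mem_univ i⟩
    exact ⟨p P, Finset.mem_image_of_mem p (Finset.mem_univ P),
      fun j => hmax j (Finset.mem_univ j)⟩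
  have hP : 0 < P := lt_of_lt_of_le (hp i) (hPmax i)
  rw [Metric.tendsto_nhds]
  intro ε hε
  rw [Filter.eventually_comap, Filter.eventually_atTop]
  -- choose constants
  obtain ⟨t₀, ht₀def⟩ : ∃ t : ℝ, t = max 2 (1 + 4*c*(2*c+1)/ε) := ⟨_, rfl⟩
  have ht₀2 : (2:ℝ) ≤ t₀ := ht₀def ▸ le_max_left _ _
  have hψ : ∀ t : ℝ, t₀ ≤ t → st8F c (t + c) - st8F c t ≤ ε/4 := by
    intro t ht
    have ht1 : 1 < t := by linarith
    have h1 := st8_psi_bound hc ht1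
    have h2 : 1 + 4*c*(2*c+1)/ε ≤ t := le_trans (ht₀def ▸ le_max_right _ _) ht
    have h3 : 4*c*(2*c+1)/ε ≤ t - 1 := by linarith
    have h4 : 4*c*(2*c+1) ≤ ε*(t-1) := by
      rw [div_le_iff₀ hε] at h3; linarith
    have h5 : c * (2*c+1) / (t-1) ≤ ε/4 := by
      rw [div_le_div_iff₀ (by linarith) (by norm_num)]; linarith
    linarith
  obtain ⟨K, hKdef⟩ : ∃ K : ℝ, K = st8F c (t₀ + c) := ⟨_, rfl⟩
  obtain ⟨Y₀, hY₀def⟩ : ∃ Y : ℝ, Y = c + 1 + Real.exp ((K - Real.log (ε/2))/c) + t₀ :=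
    ⟨_, rfl⟩
  have hexpY : 0 < Real.exp ((K - Real.log (ε/2))/c) := Real.exp_pos _
  have ht₀pos : (0:ℝ) < t₀ := by linarith
  have hY₀pos : 0 < Y₀ := by rw [hY₀def]; positivity
  refine ⟨⌈P * Y₀⌉₊, fun k hk n hnk => ?_⟩
  -- basic quantities
  obtain ⟨x, hxdef⟩ : ∃ x : ℝ, x = ((n i : ℝ)+1)/p i := ⟨_, rfl⟩
  obtain ⟨y, hydef⟩ : ∃ y : ℝ, y = ∑ j, ((n j : ℝ)+1)/p j := ⟨_, rfl⟩
  have hx : 0 < x := by rw [hxdef]; positivity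
  have hy : 0 < y := by
    rw [hydef]
    exact Finset.sum_pos (fun j _ => div_pos (by positivity) (hp j)) ⟨i, Finset.mem_univ i⟩
  have hxy : x ≤ y := hxdef ▸ hydef ▸
    Finset.single_le_sum (f := fun j => ((n j : ℝ)+1)/p j)
      (fun j _ => (div_pos (by positivity) (hp j)).le) (Finset.mem_univ i)
  -- y is large
  have hyY : Y₀ ≤ y := by
    have h1 : (P * Y₀ : ℝ) ≤ ((∑ j, n j : ℕ) : ℝ) := by
      calc (P * Y₀ : ℝ) ≤ (⌈P * Y₀⌉₊ : ℝ) := Nat.le_ceil _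
        _ ≤ (k : ℝ) := by exact_mod_cast hk
        _ = ((∑ j, n j : ℕ) : ℝ) := by rw [hnk]
    have h2 : ((∑ j, n j : ℕ) : ℝ) / P ≤ y := by
      rw [hydef, Nat.cast_sum, Finset.sum_div]
      apply Finset.sum_le_sum
      intro j _
      have := hp j
      have := hPmax j
      rw [div_le_div_iff₀ hP (hp j)]
      have h0 : (0:ℝ) ≤ (n j : ℝ) := Nat.cast_nonneg _
      nlinarith
    calc Y₀ ≤ ((∑ j, n j : ℕ) : ℝ) / P := by
          rw [le_div_iff₀ hP]; linarith [h1]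
      _ ≤ y := h2
  have hyY' : c + 1 + Real.exp ((K - Real.log (ε/2))/c) + t₀ ≤ y := hY₀def ▸ hyY
  have hyc1 : 1 ≤ y - c := by linarith
  have hyclog : Real.log (y - c) ≤ Real.log y := Real.log_le_log (by linarith) (by linarith)
  have hy1t₀ : t₀ ≤ y + 1 - c := by linarith
  -- the key smallness of the exponential tail
  have hkey : 2 * Real.exp (K - c * Real.log (y - c)) < ε := by
    have h1 : Real.exp ((K - Real.log (ε/2))/c) < y - c := by linarith
    have h2 : (K - Real.log (ε/2))/c < Real.log (y - c) :=
      (Real.lt_log_iff_exp_lt (by linarith)).mpr h1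
    have h3 : K - Real.log (ε/2) < c * Real.log (y - c) := by
      rw [div_lt_iff₀ hc] at h2; linarith
    have h4 : K - c * Real.log (y - c) < Real.log (ε/2) := by linarith
    have h5 : Real.exp (K - c * Real.log (y - c)) < ε/2 := by
      calc Real.exp (K - c * Real.log (y - c)) < Real.exp (Real.log (ε/2)) :=
            Real.exp_lt_exp.mpr h4
        _ = ε/2 := Real.exp_log (by linarith)
    linarith
  have hexpKpos : 0 < Real.exp (K - c * Real.log (y - c)) := Real.exp_pos _
  -- lower bounds for st8F at large arguments
  have hFy1 : c * Real.log (y - c) ≤ st8F c (y + 1) := by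
    have := st8F_lower hc (by linarith : (1:ℝ) < y + 1)
    have h0 : y + 1 - 1 = y := by ring
    rw [h0] at this
    calc c * Real.log (y - c) ≤ c * Real.log y := by
          exact mul_le_mul_of_nonneg_left hyclog hc.le
      _ ≤ st8F c (y+1) := this
  have hFy1c : c * Real.log (y - c) ≤ st8F c (y + 1 - c) := by
    have h1 : (1:ℝ) < y + 1 - c := by linarith
    have := st8F_lower hc h1
    have h0 : y + 1 - c - 1 = y - c := by ring
    rw [h0] at this
    exact this
  rw [Real.dist_eq, sub_zero]
  rcases Nat.eq_zero_or_pos (n i) with hni | hni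
  · -- case n i = 0
    have hr := hratio n
    rw [← hxdef, ← hydef] at hr
    rw [hlam0 n hni, hr, abs_neg, Real.abs_exp]
    have hxc : x = c := by rw [hxdef, hni, hcdef]; norm_num
    have hb1 : st8F c x ≤ K := by
      rw [hxc, hKdef]
      exact st8F_mono hc hc (by linarith)
    have hA : st8F c x - st8F c (y + 1) ≤ K - c * Real.log (y - c) := by linarith
    calc Real.exp (st8F c x - st8F c (y+1)) ≤ Real.exp (K - c * Real.log (y - c)) :=
          Real.exp_le_exp.mpr hA
      _ < ε := by linarith
  · -- case n i ≥ 1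
    rw [hlam1 n hni]
    set n' := Function.update n i (n i - 1) with hn'def
    have hn'i : n' i = n i - 1 := Function.update_self _ _ _
    have hupd : Function.update n' i (n' i + 1) = n := by
      rw [hn'i, hn'def, Function.update_idem, Nat.sub_add_cancel hni,
        Function.update_eq_self]
    have hx' : ((n' i : ℝ)+1)/p i = x - c := by
      rw [hn'i, Nat.cast_sub hni, hxdef, hcdef]
      push_cast
      field_simp
      ring
    have hy' : (∑ j, ((n' j : ℝ)+1)/p j) = y - c := by
      rw [hn'def, st8_sum_update m p i n (n i - 1), ← hydef, ← hxdef,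
        Nat.cast_sub hni]
      push_cast
      rw [hxdef, hcdef]
      field_simp
      ring
    have h1 : ω n / ω n' = Real.exp (st8F c (x - c) - st8F c (y - c + 1)) := by
      have := hratio n'
      rw [hupd, hx', hy'] at this
      exact this
    have hr := hratio n
    rw [← hxdef, ← hydef] at hr
    rw [h1, hr]
    -- exponents
    set A' : ℝ := st8F c (x - c) - st8F c (y - c + 1) with hA'def
    set A : ℝ := st8F c x - st8F c (y + 1) with hAdef
    have hxc' : 0 < x - c := by
      have h1 : (1:ℝ) ≤ (n i : ℝ) := by exact_mod_cast hni
      rw [hxdef, hcdef, div_sub_div_same]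
      exact div_pos (by linarith) hpi
    have hA'0 : A' ≤ 0 := by
      rw [hA'def]
      have := st8F_mono hc hxc' (by linarith : x - c ≤ y - c + 1)
      linarith
    have hA0 : A ≤ 0 := by
      rw [hAdef]
      have := st8F_mono hc hx (by linarith : x ≤ y + 1)
      linarith
    rcases le_or_gt t₀ (x - c) with hxt | hxt
    · -- large x: use psi bounds
      have hlip := st8_exp_lip hA'0 hA0
      have hψ1 : st8F c (x - c + c) - st8F c (x - c) ≤ ε/4 := hψ _ hxt
      have hψ1' : 0 ≤ st8F c (x - c + c) - st8F c (x - c) := by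
        have := st8F_mono hc hxc' (by linarith : x - c ≤ x - c + c)
        linarith
      have hψ2 : st8F c (y + 1 - c + c) - st8F c (y + 1 - c) ≤ ε/4 := hψ _ hy1t₀
      have hψ2' : 0 ≤ st8F c (y + 1 - c + c) - st8F c (y + 1 - c) := by
        have := st8F_mono hc (by linarith : (0:ℝ) < y + 1 - c)
          (by linarith : y + 1 - c ≤ y + 1 - c + c)
        linarith
      have e1 : x - c + c = x := by ring
      have e2 : y + 1 - c + c = y + 1 := by ring
      have e3 : y - c + 1 = y + 1 - c := by ring
      rw [e1] at hψ1 hψ1'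
      rw [e2] at hψ2 hψ2'
      have hdiff : |A' - A| ≤ ε/2 := by
        rw [hA'def, hAdef, e3]
        rw [abs_le]
        constructor <;> linarith
      calc |Real.exp A' - Real.exp A| ≤ |A' - A| := hlip
        _ ≤ ε/2 := hdiff
        _ < ε := by linarith
    · -- small x: both terms are small
      have hb1 : st8F c (x - c) ≤ K := by
        rw [hKdef]
        exact st8F_mono hc hxc' (by linarith)
      have hb2 : st8F c x ≤ K := by
        rw [hKdef]
        exact st8F_mono hc hx (by linarith)
      have hE1 : Real.exp A' ≤ Real.exp (K - c * Real.log (y - c)) := by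
        apply Real.exp_le_exp.mpr
        rw [hA'def]
        have e3 : y - c + 1 = y + 1 - c := by ring
        rw [e3]
        linarith
      have hE2 : Real.exp A ≤ Real.exp (K - c * Real.log (y - c)) := by
        apply Real.exp_le_exp.mpr
        rw [hAdef]
        linarith
      have habs : |Real.exp A' - Real.exp A| ≤ Real.exp A' + Real.exp A := by
        have h1 := Real.exp_pos A'
        have h2 := Real.exp_pos A
        rw [abs_le]
        constructor <;> linarith
      calc |Real.exp A' - Real.exp A| ≤ Real.exp A' + Real.exp A := habs
        _ ≤ 2 * Real.exp (K - c * Real.log (y - c)) := by linarith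
        _ < ε := hkey
end

section
/- Let m ≥ 1, let p_1,…,p_m be positive real numbers, and set ω₁(α) := ∫_{Ω₁} ∏_{j=1}^m |z_j|^{2α_j} dV(z) for α ∈ ℕ^m. Fix i ∈ {1,…,m} and b ∈ ℕ. Then the ratio ω₁(n+e_i)/ω₁(n) tends to 0 as ∑_{j=1}^m n_j → ∞ over multi-indices n ∈ ℕ^m with n_i = b, where e_i is the i-th standard basis vector. -/
open MeasureTheory Filter

namespace St9
variable {m : ℕ} {p : Fin m → ℝ}

noncomputable def gg (α : Fin m → ℕ) (z : Fin m → ℂ) : ℝ :=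
  ∏ j, ‖z j‖ ^ (2 * α j)

def Eg (p : Fin m → ℝ) : Set (Fin m → ℂ) :=
  {z | ∑ j, ‖z j‖ ^ (2 * p j) < 1}

lemma gg_nonneg (α : Fin m → ℕ) (z : Fin m → ℂ) : 0 ≤ gg α z :=
  Finset.prod_nonneg fun j _ => pow_nonneg (norm_nonneg _) _

lemma continuous_gg (α : Fin m → ℕ) : Continuous (gg α) :=
  continuous_finset_prod _ fun j _ =>
    ((continuous_norm.comp (continuous_apply j)).pow _)

lemma isOpen_Eg (hp : ∀ j, 0 < p j) : IsOpen (Eg p) := by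
  have hc : Continuous fun z : Fin m → ℂ => ∑ j, ‖z j‖ ^ (2 * p j) := by
    apply continuous_finset_sum
    intro j _
    have h1 : Continuous fun z : Fin m → ℂ => ‖z j‖ :=
      continuous_norm.comp (continuous_apply j)
    exact (Real.continuous_rpow_const (by have := hp j; linarith)).comp h1
  exact isOpen_Iio.preimage hc

lemma measurableSet_Eg (hp : ∀ j, 0 < p j) : MeasurableSet (Eg p) :=
  (isOpen_Eg hp).measurableSet

lemma abs_lt_one_of_mem (hp : ∀ j, 0 < p j) {z : Fin m → ℂ} (hz : z ∈ Eg p) (j : Fin m) :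
    ‖z j‖ < 1 := by
  have hterm : ‖z j‖ ^ (2 * p j) < 1 := by
    refine lt_of_le_of_lt ?_ hz
    exact Finset.single_le_sum (f := fun k => ‖z k‖ ^ (2 * p k))
      (fun k _ => Real.rpow_nonneg (norm_nonneg _) _) (Finset.mem_univ j)
  by_contra h
  push_neg at h
  exact absurd (Real.one_le_rpow h (by have := hp j; linarith)) (not_le.2 hterm)


lemma integrableOn_gg (α : Fin m → ℕ) {S : Set (Fin m → ℂ)} (hS : MeasurableSet S)
    {R : ℝ} (hR : 0 ≤ R) (hmem : ∀ z ∈ S, ∀ j, ‖z j‖ ≤ R) :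
    IntegrableOn (gg α) S := by
  have hSsub : S ⊆ Set.pi Set.univ (fun _ : Fin m => Metric.closedBall (0:ℂ) R) := by
    intro z hz
    intro j _
    simpa [Complex.dist_eq] using hmem z hz j
  have hvol : volume S ≠ ⊤ := by
    refine ne_of_lt (lt_of_le_of_lt (measure_mono hSsub) ?_)
    rw [volume_pi_pi]
    exact ENNReal.prod_lt_top fun j _ => measure_closedBall_lt_top
  refine Measure.integrableOn_of_bounded hvol
    ((continuous_gg α).aestronglyMeasurable) (M := (max R 1) ^ (∑ j, 2 * α j)) ?_
  refine (ae_restrict_iff' hS).2 (ae_of_all _ fun z hz => ?_)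
  rw [Real.norm_eq_abs, abs_of_nonneg (gg_nonneg α z)]
  rw [← Finset.prod_pow_eq_pow_sum]
  refine Finset.prod_le_prod (fun j _ => pow_nonneg (norm_nonneg _) _)
    (fun j _ => pow_le_pow_left₀ (norm_nonneg _) ?_ _)
  exact le_max_of_le_left (hmem z hz j)

lemma omega_pos (hp : ∀ j, 0 < p j) (α : Fin m → ℕ) :
    0 < ∫ z in Eg p, gg α z := by
  have hint : IntegrableOn (gg α) (Eg p) :=
    integrableOn_gg α (measurableSet_Eg hp) zero_le_one
      (fun z hz j => (abs_lt_one_of_mem hp hz j).le)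
  rw [setIntegral_pos_iff_support_of_nonneg_ae
    (ae_of_all _ fun z => gg_nonneg α z) hint]
  have hEgopen : IsOpen (Eg p) := isOpen_Eg hp
  have hEgne : (0 : Fin m → ℂ) ∈ Eg p := by
    simp only [Eg, Set.mem_setOf_eq, Pi.zero_apply, norm_zero]
    rw [Finset.sum_eq_zero fun j _ => Real.zero_rpow (by have := hp j; positivity)]
    norm_num
  have hpos : 0 < volume (Eg p) := hEgopen.measure_pos volume ⟨0, hEgne⟩
  -- the set where some coordinate vanishes is null
  have hnull : volume (⋃ j : Fin m, {z : Fin m → ℂ | z j = 0}) = 0 := by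
    refine measure_iUnion_null fun j => ?_
    have : {z : Fin m → ℂ | z j = 0} =
        (LinearMap.ker (LinearMap.proj (R := ℝ) (φ := fun _ : Fin m => ℂ) j) : Set (Fin m → ℂ)) := by
      ext z; simp [LinearMap.mem_ker]
    rw [this]
    refine Measure.addHaar_submodule _ _ ?_
    intro h
    have : (Pi.single j (1:ℂ) : Fin m → ℂ) ∈
        LinearMap.ker (LinearMap.proj (R := ℝ) (φ := fun _ : Fin m => ℂ) j) := h ▸ trivial
    simp [LinearMap.mem_ker] at this
  have hsub : Eg p \ (⋃ j : Fin m, {z : Fin m → ℂ | z j = 0}) ⊆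
      Function.support (gg α) ∩ Eg p := by
    intro z hz
    refine ⟨?_, hz.1⟩
    have hz2 : ∀ j, z j ≠ 0 := by
      intro j hj
      exact hz.2 (Set.mem_iUnion.2 ⟨j, hj⟩)
    have : 0 < gg α z :=
      Finset.prod_pos fun j _ => pow_pos (norm_pos_iff.mpr (hz2 j)) _
    exact this.ne'
  refine lt_of_lt_of_le ?_ (measure_mono hsub)
  rwa [measure_diff_null hnull]


lemma key (hp : ∀ j, 0 < p j) (i : Fin m) (b : ℕ) {ε : ℝ} (hε0 : 0 < ε) (hε1 : ε < 1) :
    ∃ C : ℝ, 0 ≤ C ∧ ∃ κ : ℝ, 0 ≤ κ ∧ κ < 1 ∧ ∀ n : Fin m → ℕ, n i = b →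
      (∫ z in Eg p, gg (Function.update n i (n i + 1)) z) ≤
        (ε + C * κ ^ (∑ j ∈ Finset.univ.erase i, n j)) * ∫ z in Eg p, gg n z := by
  haveI : Nonempty (Fin m) := ⟨i⟩
  set c : ℝ := ε ^ p i with hc_def
  have hc0 : 0 < c := Real.rpow_pos_of_pos hε0 _
  have hc1 : c < 1 := Real.rpow_lt_one hε0.le hε1 (hp i)
  set a : Fin m → ℝ := fun j => if j = i then (1 + c) / 2 else 1 + c / 2 with ha_def
  have ha : ∀ j, 0 < a j := by
    intro j
    by_cases h : j = i <;> simp [ha_def, h] <;> linarith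
  set s : Fin m → ℝ := fun j => a j ^ (-(1 / (2 * p j))) with hs_def
  have hs0 : ∀ j, 0 < s j := fun j => Real.rpow_pos_of_pos (ha j) _
  have hs_pow : ∀ j, ((s j)⁻¹) ^ (2 * p j) = a j := by
    intro j
    have hpj := hp j
    rw [hs_def]
    simp only
    rw [Real.rpow_neg (ha j).le, inv_inv, ← Real.rpow_mul (ha j).le]
    rw [show 1 / (2 * p j) * (2 * p j) = 1 by field_simp]
    exact Real.rpow_one _
  have hsj : ∀ j, j ≠ i → s j < 1 := by
    intro j hj
    apply Real.rpow_lt_one_of_one_lt_of_neg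
    · simp [ha_def, hj]; linarith
    · have := hp j; rw [neg_lt, neg_zero]; positivity
  -- the linear map
  set L' : (Fin m → ℂ) →L[ℝ] (Fin m → ℂ) :=
    ContinuousLinearMap.pi (fun j => (s j) • (ContinuousLinearMap.proj j)) with hL'_def
  have hL'app : ∀ w j, L' w j = (s j : ℝ) • w j := by
    intro w j; simp [hL'_def]
  have hinj : Function.Injective L' := by
    intro x y hxy
    funext j
    have := congrFun hxy j
    rw [hL'app, hL'app] at this
    exact smul_right_injective ℂ (hs0 j).ne' this
  set κ : ℝ := Finset.univ.sup' Finset.univ_nonempty (fun j => if j = i then (1:ℝ)/2 else s j)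
    with hκ_def
  have hκ_half : (1:ℝ)/2 ≤ κ := by
    have h := Finset.le_sup' (f := fun j => if j = i then (1:ℝ)/2 else s j) (Finset.mem_univ i)
    rw [if_pos rfl] at h
    exact h
  have hκ0 : 0 ≤ κ := by linarith
  have hκ1 : κ < 1 := by
    rw [hκ_def, Finset.sup'_lt_iff]
    intro j _
    by_cases h : j = i
    · simp [h]; norm_num
    · simp [h]; exact hsj j h
  have hκs : ∀ j, j ≠ i → s j ≤ κ := by
    intro j hj
    have h := Finset.le_sup' (f := fun k => if k = i then (1:ℝ)/2 else s k) (Finset.mem_univ j)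
    rw [if_neg hj] at h
    exact h
  set d : ℝ := |L'.det| with hd_def
  refine ⟨d * s i ^ (2 * b), by positivity, κ ^ 2, by positivity, ?_, ?_⟩
  · nlinarith
  intro n hni
  set Ω : Set (Fin m → ℂ) := Eg p with hΩ_def
  have hΩmeas : MeasurableSet Ω := measurableSet_Eg hp
  set B : Set (Fin m → ℂ) := {z | ε < ‖z i‖ ^ 2} with hB_def
  have hBmeas : MeasurableSet B := by
    have : Continuous fun z : Fin m → ℂ => ‖z i‖ ^ 2 :=
      (continuous_norm.comp (continuous_apply i)).pow 2
    exact measurableSet_lt measurable_const this.measurable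
  have hint : IntegrableOn (gg n) Ω :=
    integrableOn_gg n hΩmeas zero_le_one (fun z hz j => (abs_lt_one_of_mem hp hz j).le)
  have hint' : IntegrableOn (gg (Function.update n i (n i + 1))) Ω :=
    integrableOn_gg _ hΩmeas zero_le_one (fun z hz j => (abs_lt_one_of_mem hp hz j).le)
  -- pointwise product formula
  have hgg_upd : ∀ z : Fin m → ℂ, gg (Function.update n i (n i + 1)) z
      = ‖z i‖ ^ 2 * gg n z := by
    intro z
    have h1 : (fun j => ‖z j‖ ^ (2 * Function.update n i (n i + 1) j))
        = Function.update (fun j => ‖z j‖ ^ (2 * n j)) i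
          (‖z i‖ ^ (2 * (n i + 1))) := by
      funext j
      rcases eq_or_ne j i with rfl | hj
      · simp
      · simp [Function.update_of_ne hj]
    rw [gg, gg, h1, Finset.prod_update_of_mem (Finset.mem_univ i),
      ← Finset.mul_prod_erase Finset.univ _ (Finset.mem_univ i),
      show 2 * (n i + 1) = 2 + 2 * n i by ring, pow_add, Finset.erase_eq]
    ring
  -- pointwise bound on Ω
  have hptwise : ∀ z ∈ Ω, gg (Function.update n i (n i + 1)) z
      ≤ ε * gg n z + B.indicator (gg n) z := by
    intro z hz
    rw [hgg_upd z]
    by_cases hB : z ∈ B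
    · have h1 : ‖z i‖ ^ 2 ≤ 1 := by
        have := abs_lt_one_of_mem hp hz i
        nlinarith [norm_nonneg (z i)]
      rw [Set.indicator_of_mem hB]
      nlinarith [gg_nonneg n z, mul_le_mul_of_nonneg_right h1 (gg_nonneg n z)]
    · have h1 : ‖z i‖ ^ 2 ≤ ε := by
        rw [hB_def, Set.mem_setOf_eq, not_lt] at hB
        exact hB
      rw [Set.indicator_of_notMem hB]
      have := gg_nonneg n z
      nlinarith
  have hintB : IntegrableOn (fun z => ε * gg n z + B.indicator (gg n) z) Ω :=
    (hint.const_mul ε).add (hint.indicator hBmeas)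
  have hsplit : (∫ z in Ω, gg (Function.update n i (n i + 1)) z)
      ≤ ε * (∫ z in Ω, gg n z) + ∫ z in Ω ∩ B, gg n z := by
    calc (∫ z in Ω, gg (Function.update n i (n i + 1)) z)
        ≤ ∫ z in Ω, (ε * gg n z + B.indicator (gg n) z) :=
          setIntegral_mono_on hint' hintB hΩmeas hptwise
      _ = ε * (∫ z in Ω, gg n z) + ∫ z in Ω, B.indicator (gg n) z := by
          rw [integral_add (hint.const_mul ε) (hint.indicator hBmeas), integral_const_mul]
      _ = ε * (∫ z in Ω, gg n z) + ∫ z in Ω ∩ B, gg n z := by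
          rw [setIntegral_indicator hBmeas]
  -- inclusion of Ω ∩ B into the image of the shrunken egg
  have hsub : Ω ∩ B ⊆ ⇑L' '' Ω := by
    rintro z ⟨hzΩ, hzB⟩
    refine ⟨fun j => (s j)⁻¹ • z j, ?_, ?_⟩
    · show (fun j => (s j)⁻¹ • z j) ∈ Eg p
      rw [Eg, Set.mem_setOf_eq]
      have hterm : ∀ j, ‖(s j)⁻¹ • z j‖ ^ (2 * p j)
          = a j * ‖z j‖ ^ (2 * p j) := by
        intro j
        have habs : ‖(s j)⁻¹ • z j‖ = (s j)⁻¹ * ‖z j‖ := by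
          rw [norm_smul, Real.norm_eq_abs,
            abs_of_pos (inv_pos.2 (hs0 j))]
        rw [habs, Real.mul_rpow (by positivity) (norm_nonneg _), hs_pow j]
      rw [Finset.sum_congr rfl (fun j _ => hterm j)]
      set x : Fin m → ℝ := fun j => ‖z j‖ ^ (2 * p j) with hx_def
      have hT : ∑ j, x j < 1 := hzΩ
      have hxi : c < x i := by
        have h2 : x i = (‖z i‖ ^ 2) ^ p i := by
          rw [hx_def]
          simp only
          rw [← Real.rpow_natCast (‖z i‖) 2,
            ← Real.rpow_mul (norm_nonneg _)]
          norm_num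
        rw [h2, hc_def]
        exact Real.rpow_lt_rpow hε0.le hzB (hp i)
      have hxnn : ∀ j, 0 ≤ x j := fun j => Real.rpow_nonneg (norm_nonneg _) _
      rw [← Finset.add_sum_erase _ _ (Finset.mem_univ i)]
      rw [← Finset.add_sum_erase _ x (Finset.mem_univ i)] at hT
      have hS : 0 ≤ ∑ j ∈ Finset.univ.erase i, x j := Finset.sum_nonneg fun j _ => hxnn j
      have haj : ∀ j ∈ Finset.univ.erase i, a j * x j = (1 + c / 2) * x j := by
        intro j hj
        rw [ha_def]
        simp [Finset.ne_of_mem_erase hj]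
      rw [Finset.sum_congr rfl haj, ← Finset.mul_sum]
      have hai : a i = (1 + c) / 2 := by rw [ha_def]; simp
      rw [hai]
      have h3 : (1 + c / 2) * (∑ j ∈ Finset.univ.erase i, x j)
          < (1 + c / 2) * (1 - x i) := by
        apply mul_lt_mul_of_pos_left _ (by linarith)
        linarith
      nlinarith [h3, hxi, hc0]
    · funext j
      rw [hL'app]
      exact smul_inv_smul₀ (hs0 j).ne' (z j)
  -- integrability on the image
  set R : ℝ := Finset.univ.sup' Finset.univ_nonempty s with hR_def
  have hsR : ∀ j, s j ≤ R := fun j => Finset.le_sup' s (Finset.mem_univ j)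
  have hR0 : 0 ≤ R := le_trans (hs0 i).le (hsR i)
  have himg_int : IntegrableOn (gg n) (⇑L' '' Ω) := by
    have hA : MeasurableSet (Set.pi Set.univ fun _ : Fin m => Metric.closedBall (0:ℂ) R) :=
      MeasurableSet.univ_pi fun _ => Metric.isClosed_closedBall.measurableSet
    have hAmem : ∀ z ∈ (Set.pi Set.univ fun _ : Fin m => Metric.closedBall (0:ℂ) R),
        ∀ j, ‖z j‖ ≤ R := by
      intro z hz j
      have := hz j (Set.mem_univ j)
      simpa [Complex.dist_eq] using this
    refine (integrableOn_gg n hA hR0 hAmem).mono_set ?_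
    rintro z ⟨w, hw, rfl⟩
    intro j _
    rw [Metric.mem_closedBall, Complex.dist_eq, sub_zero]
    rw [hL'app, norm_smul, Real.norm_eq_abs, abs_of_pos (hs0 j)]
    have h1 : ‖w j‖ ≤ 1 := (abs_lt_one_of_mem hp hw j).le
    calc s j * ‖w j‖ ≤ s j * 1 :=
          mul_le_mul_of_nonneg_left h1 (hs0 j).le
      _ ≤ R := by rw [mul_one]; exact hsR j
  have hmono : (∫ z in Ω ∩ B, gg n z) ≤ ∫ z in ⇑L' '' Ω, gg n z :=
    setIntegral_mono_set himg_int (ae_of_all _ fun z => gg_nonneg n z)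
      (HasSubset.Subset.eventuallyLE hsub)
  -- change of variables
  have hCoV : (∫ z in ⇑L' '' Ω, gg n z)
      = (d * ∏ j, s j ^ (2 * n j)) * ∫ z in Ω, gg n z := by
    rw [integral_image_eq_integral_abs_det_fderiv_smul volume hΩmeas
      (fun x _ => L'.hasFDerivAt.hasFDerivWithinAt) hinj.injOn (gg n)]
    have hptw : ∀ z, |L'.det| • gg n (L' z) = (d * ∏ j, s j ^ (2 * n j)) * gg n z := by
      intro z
      rw [smul_eq_mul]
      have hg : gg n (L' z) = (∏ j, s j ^ (2 * n j)) * gg n z := by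
        rw [gg, gg, ← Finset.prod_mul_distrib]
        refine Finset.prod_congr rfl fun j _ => ?_
        rw [hL'app, show ‖s j • z j‖ = s j * ‖z j‖ from by
          rw [norm_smul, Real.norm_eq_abs,
            abs_of_pos (hs0 j)], mul_pow]
      rw [hg, hd_def]
      ring
    simp_rw [hptw]
    rw [integral_const_mul]
  -- product bound
  have hprod : (∏ j, s j ^ (2 * n j))
      ≤ s i ^ (2 * b) * (κ ^ 2) ^ (∑ j ∈ Finset.univ.erase i, n j) := by
    rw [← Finset.mul_prod_erase Finset.univ _ (Finset.mem_univ i), hni]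
    have h1 : (∏ j ∈ Finset.univ.erase i, s j ^ (2 * n j))
        ≤ ∏ j ∈ Finset.univ.erase i, κ ^ (2 * n j) :=
      Finset.prod_le_prod (fun j _ => by positivity)
        (fun j hj => pow_le_pow_left₀ (hs0 j).le (hκs j (Finset.ne_of_mem_erase hj)) _)
    have h2 : (∏ j ∈ Finset.univ.erase i, κ ^ (2 * n j))
        = (κ ^ 2) ^ (∑ j ∈ Finset.univ.erase i, n j) := by
      rw [Finset.prod_pow_eq_pow_sum, ← Finset.mul_sum, pow_mul]
    calc s i ^ (2 * b) * ∏ j ∈ Finset.univ.erase i, s j ^ (2 * n j)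
        ≤ s i ^ (2 * b) * ∏ j ∈ Finset.univ.erase i, κ ^ (2 * n j) :=
          mul_le_mul_of_nonneg_left h1 (by positivity)
      _ = s i ^ (2 * b) * (κ ^ 2) ^ (∑ j ∈ Finset.univ.erase i, n j) := by rw [h2]
  -- assemble
  have hωnn : 0 ≤ ∫ z in Ω, gg n z :=
    setIntegral_nonneg hΩmeas fun z _ => gg_nonneg n z
  have hd0 : 0 ≤ d := abs_nonneg _
  calc (∫ z in Ω, gg (Function.update n i (n i + 1)) z)
      ≤ ε * (∫ z in Ω, gg n z) + ∫ z in Ω ∩ B, gg n z := hsplit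
    _ ≤ ε * (∫ z in Ω, gg n z) + (d * ∏ j, s j ^ (2 * n j)) * ∫ z in Ω, gg n z := by
        rw [← hCoV]; linarith [hmono]
    _ ≤ ε * (∫ z in Ω, gg n z)
        + (d * (s i ^ (2 * b) * (κ ^ 2) ^ (∑ j ∈ Finset.univ.erase i, n j)))
          * ∫ z in Ω, gg n z := by
        apply add_le_add_right
        apply mul_le_mul_of_nonneg_right _ hωnn
        exact mul_le_mul_of_nonneg_left hprod hd0
    _ = (ε + d * s i ^ (2 * b) * (κ ^ 2) ^ (∑ j ∈ Finset.univ.erase i, n j))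
          * ∫ z in Ω, gg n z := by ring

end St9

/-- For the monomial norms `ω₁(α) = ∫_{Ω₁} ∏ |z_j|^(2α_j) dV` on the egg domain
`Ω₁ = {z ∈ ℂ^m : ∑ |z_j|^(2 p_j) < 1}`, the ratio `ω₁(n+e_i)/ω₁(n)` tends to `0`
as `∑ n_j → ∞` over multi-indices `n` with `n_i = b`. -/
theorem statement9 (m : ℕ) (hm : 1 ≤ m) (p : Fin m → ℝ) (hp : ∀ j, 0 < p j)
    (ω₁ : (Fin m → ℕ) → ℝ)
    (hω₁ : ∀ α : Fin m → ℕ,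
      ω₁ α = ∫ z in {z : Fin m → ℂ | ∑ j, ‖z j‖ ^ (2 * p j) < 1},
        ∏ j, ‖z j‖ ^ (2 * α j))
    (i : Fin m) (b : ℕ) :
    Tendsto (fun n : Fin m → ℕ => ω₁ (Function.update n i (n i + 1)) / ω₁ n)
      (Filter.comap (fun n : Fin m → ℕ => ∑ j, n j) Filter.atTop ⊓
        Filter.principal {n : Fin m → ℕ | n i = b})
      (nhds 0) := by
  set F := Filter.comap (fun n : Fin m → ℕ => ∑ j, n j) Filter.atTop ⊓
      Filter.principal {n : Fin m → ℕ | n i = b} with hF_def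
  have hωeq : ∀ α : Fin m → ℕ, ω₁ α = ∫ z in St9.Eg p, St9.gg α z := fun α => hω₁ α
  have hsum : Tendsto (fun n : Fin m → ℕ => ∑ j, n j) F atTop :=
    tendsto_comap.mono_left inf_le_left
  have hbev : ∀ᶠ n in F, n i = b := le_principal_iff.1 inf_le_right
  have hk : Tendsto (fun n : Fin m → ℕ => ∑ j ∈ Finset.univ.erase i, n j) F atTop := by
    rw [tendsto_atTop]
    intro N
    filter_upwards [hsum.eventually (eventually_ge_atTop (N + b)), hbev] with n h1n hnb
    have h2 : ∑ j, n j = n i + ∑ j ∈ Finset.univ.erase i, n j :=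
      (Finset.add_sum_erase _ _ (Finset.mem_univ i)).symm
    rw [h2, hnb] at h1n
    omega
  rw [Metric.tendsto_nhds]
  intro ε0 hε0
  set ε : ℝ := min (ε0 / 2) (1 / 2) with hε_def
  have hεpos : 0 < ε := lt_min (by linarith) (by norm_num)
  have hεlt1 : ε < 1 := lt_of_le_of_lt (min_le_right _ _) (by norm_num)
  obtain ⟨C, hC0, κ, hκ0, hκ1, hkey⟩ := St9.key hp i b hεpos hεlt1
  have h2 : Tendsto (fun n : Fin m → ℕ =>
      C * κ ^ (∑ j ∈ Finset.univ.erase i, n j)) F (nhds 0) := by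
    have := ((tendsto_pow_atTop_nhds_zero_of_lt_one hκ0 hκ1).comp hk).const_mul C
    simpa using this
  have h3 : ∀ᶠ n in F, C * κ ^ (∑ j ∈ Finset.univ.erase i, n j) < ε0 / 2 :=
    h2.eventually (gt_mem_nhds (by linarith : (0:ℝ) < ε0 / 2))
  filter_upwards [hbev, h3] with n hnb h3n
  rw [hωeq, hωeq]
  have hden : 0 < ∫ z in St9.Eg p, St9.gg n z := St9.omega_pos hp n
  have hnum : 0 ≤ ∫ z in St9.Eg p, St9.gg (Function.update n i (n i + 1)) z :=
    setIntegral_nonneg (St9.measurableSet_Eg hp) fun z _ => St9.gg_nonneg _ z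
  have hkeyn := hkey n hnb
  rw [Real.dist_eq, sub_zero, abs_of_nonneg (div_nonneg hnum hden.le)]
  rw [div_lt_iff₀ hden]
  have hεle : ε ≤ ε0 / 2 := min_le_left _ _
  nlinarith [hkeyn, hden, h3n]
end

section
/- Let H be a complex Hilbert space, let m ≥ 1, and let M_1,…,M_m be bounded linear operators on H such that M_j M_k* − M_k* M_j is compact for all j, k. Let K ⊆ H be a closed subspace invariant under every M_j, let P be the orthogonal projection onto K, and Q := 1 − P. Then the following are equivalent: (1) for all j, k, the operator P M_j P M_k* P − P M_k* P M_j P is compact (essential normality of the restricted tuple on K); (2) for all j, k, the operator Q M_j Q M_k* Q − Q M_k* Q M_j Q is compact (essential normality of the compressed tuple on K^⊥); (3) for every j, the commutator M_j P − P M_j is compact; (4) for every j, P M_j Q is compact; (5) for every j, the commutator M_j Q − Q M_j is compact; (6) for every j, Q M_j* P is compact. -/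
open ContinuousLinearMap
open ContinuousLinearMap Metric Set

private lemma aux_est {H : Type*} [NormedAddCommGroup H] [InnerProductSpace ℂ H]
    [CompleteSpace H] (X : H →L[ℂ] H) (x z : H) :
    ‖X x - X z‖ ^ 2 ≤ ‖(adjoint X ∘L X) x - (adjoint X ∘L X) z‖ * ‖x - z‖ := by
  calc ‖X x - X z‖ ^ 2 = ‖X (x - z)‖ ^ 2 := by rw [map_sub]
    _ = RCLike.re (inner (𝕜 := ℂ) (X (x - z)) (X (x - z))) :=
        (inner_self_eq_norm_sq _).symm
    _ = RCLike.re (inner (𝕜 := ℂ) ((adjoint X ∘L X) (x - z)) (x - z)) := by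
        rw [comp_apply, adjoint_inner_left]
    _ ≤ ‖(adjoint X ∘L X) (x - z)‖ * ‖x - z‖ := re_inner_le_norm _ _
    _ = ‖(adjoint X ∘L X) x - (adjoint X ∘L X) z‖ * ‖x - z‖ := by rw [map_sub]

private lemma aux_compact {H : Type*} [NormedAddCommGroup H] [InnerProductSpace ℂ H]
    [CompleteSpace H] {X : H →L[ℂ] H}
    (h : IsCompactOperator ⇑(adjoint X ∘L X)) : IsCompactOperator ⇑X := by
  set S := adjoint X ∘L X with hS
  have hX : IsCompactOperator ⇑(X : H →ₗ[ℂ] H) := by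
    rw [isCompactOperator_iff_isCompact_closure_image_closedBall (X : H →ₗ[ℂ] H) one_pos]
    refine TotallyBounded.isCompact_of_isClosed (TotallyBounded.closure ?_) isClosed_closure
    have hS' : IsCompactOperator ⇑(S : H →ₗ[ℂ] H) := h
    have htb : TotallyBounded (⇑S '' closedBall (0 : H) 1) :=
      (hS'.isCompact_closure_image_closedBall 1).totallyBounded.subset subset_closure
    rw [Metric.totallyBounded_iff]
    intro ε hε
    set δ : ℝ := ε ^ 2 / 4 with hδdef
    have hδ : 0 < δ := by positivity
    obtain ⟨t, hts, htfin, htcov⟩ := totallyBounded_iff_subset.mp htb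
      {p : H × H | dist p.1 p.2 < δ} (Metric.dist_mem_uniformity hδ)
    classical
    let g : H → H := fun y =>
      if hy : ∃ w ∈ closedBall (0 : H) 1, S w = y then hy.choose else 0
    have hg : ∀ y ∈ t, g y ∈ closedBall (0 : H) 1 ∧ S (g y) = y := by
      intro y hy
      obtain ⟨w, hw, hwy⟩ := hts hy
      have hex : ∃ w ∈ closedBall (0 : H) 1, S w = y := ⟨w, hw, hwy⟩
      simp only [g, dif_pos hex]
      exact ⟨hex.choose_spec.1, hex.choose_spec.2⟩
    refine ⟨(fun y => X (g y)) '' t, htfin.image _, ?_⟩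
    rintro - ⟨x, hx, rfl⟩
    obtain ⟨y, hy, hxy⟩ := mem_iUnion₂.mp (htcov ⟨x, hx, rfl⟩)
    have hxy' : dist (S x) y < δ := hxy
    refine mem_iUnion₂.mpr ⟨X (g y), mem_image_of_mem _ hy, ?_⟩
    have h1 : ‖X x - X (g y)‖ ^ 2 ≤ ‖S x - S (g y)‖ * ‖x - g y‖ := aux_est X x (g y)
    rw [(hg y hy).2] at h1
    have h2 : ‖x - g y‖ ≤ 2 := by
      have := (hg y hy).1
      rw [mem_closedBall_zero_iff] at this hx
      calc ‖x - g y‖ ≤ ‖x‖ + ‖g y‖ := norm_sub_le _ _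
        _ ≤ 2 := by linarith
    have h3 : ‖S x - y‖ < δ := by rwa [← dist_eq_norm]
    have h4 : ‖X x - X (g y)‖ ^ 2 < ε ^ 2 := by
      have : ‖S x - y‖ * ‖x - g y‖ < δ * 2 := by
        have hSnn : (0:ℝ) ≤ ‖S x - y‖ := norm_nonneg _
        nlinarith [norm_nonneg (x - g y)]
      nlinarith
    have := lt_of_pow_lt_pow_left₀ 2 hε.le h4
    rwa [mem_ball, dist_eq_norm]

  exact hX

open ContinuousLinearMap


set_option maxHeartbeats 1000000 in

/-- Arveson–Douglas: for an essentially normal tuple `M_1,…,M_m` on a Hilbert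
space `H` and a closed invariant subspace `K` with orthogonal projection `P`
(characterized by `P x ∈ K` and `x − P x ⟂ K`) and `Q = 1 − P`, the following
are equivalent: essential normality of the restricted tuple on `K`, essential
normality of the compressed tuple on `K^⊥`, compactness of all `[M_j, P]`,
of all `P M_j Q`, of all `[M_j, Q]`, and of all `Q M_j* P`. -/
theorem statement12 {H : Type*} [NormedAddCommGroup H] [InnerProductSpace ℂ H]
    [CompleteSpace H] (m : ℕ) (hm : 1 ≤ m) (M : Fin m → H →L[ℂ] H)
    (hM : ∀ j k : Fin m,
      IsCompactOperator
        ⇑(M j ∘L ContinuousLinearMap.adjoint (M k)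
          - ContinuousLinearMap.adjoint (M k) ∘L M j))
    (K : Submodule ℂ H) (hKclosed : IsClosed (K : Set H))
    (hKinv : ∀ j : Fin m, ∀ x ∈ K, M j x ∈ K)
    (P Q : H →L[ℂ] H)
    (hP : ∀ x : H, P x ∈ K ∧ x - P x ∈ Kᗮ)
    (hQ : Q = 1 - P) :
    [ (∀ j k : Fin m, IsCompactOperator
        ⇑(P ∘L M j ∘L P ∘L ContinuousLinearMap.adjoint (M k) ∘L P
          - P ∘L ContinuousLinearMap.adjoint (M k) ∘L P ∘L M j ∘L P)),
      (∀ j k : Fin m, IsCompactOperator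
        ⇑(Q ∘L M j ∘L Q ∘L ContinuousLinearMap.adjoint (M k) ∘L Q
          - Q ∘L ContinuousLinearMap.adjoint (M k) ∘L Q ∘L M j ∘L Q)),
      (∀ j : Fin m, IsCompactOperator ⇑(M j ∘L P - P ∘L M j)),
      (∀ j : Fin m, IsCompactOperator ⇑(P ∘L M j ∘L Q)),
      (∀ j : Fin m, IsCompactOperator ⇑(M j ∘L Q - Q ∘L M j)),
      (∀ j : Fin m, IsCompactOperator
        ⇑(Q ∘L ContinuousLinearMap.adjoint (M j) ∘L P)) ].TFAE := by
  -- P fixes K pointwise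
  have hPK : ∀ y ∈ K, P y = y := by
    intro y hy
    have h2 : y - P y ∈ K := K.sub_mem hy (hP y).1
    have h0 : y - P y = 0 := by
      have := (Submodule.mem_orthogonal K (y - P y)).mp (hP y).2 _ h2
      exact inner_self_eq_zero.mp this
    have := sub_eq_zero.mp h0
    exact this.symm
  -- P is idempotent
  have hp : P * P = P := by
    ext x
    exact hPK _ (hP x).1
  -- P is self-adjoint
  have hPadj : ContinuousLinearMap.adjoint P = P := by
    symm
    rw [eq_adjoint_iff]
    intro x y
    have h1 : inner (𝕜 := ℂ) (P x) (y - P y) = 0 :=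
      Submodule.inner_right_of_mem_orthogonal (hP x).1 (hP y).2
    have h2 : inner (𝕜 := ℂ) (x - P x) (P y) = 0 :=
      Submodule.inner_left_of_mem_orthogonal (hP y).1 (hP x).2
    rw [inner_sub_right] at h1
    rw [inner_sub_left] at h2
    have e1 := sub_eq_zero.mp h1
    have e2 := sub_eq_zero.mp h2
    rw [e1, ← e2]
  have hQadj : ContinuousLinearMap.adjoint Q = Q := by
    rw [hQ]
    simp only [map_sub, hPadj]
    congr 1
    symm
    rw [eq_adjoint_iff]
    intro x y
    simp
  -- invariance: P (M j) P = (M j) P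
  have hmp : ∀ j : Fin m, P * (M j * P) = M j * P := by
    intro j
    ext x
    exact hPK _ (hKinv j _ (hP x).1)
  have hp' : ∀ y : H →L[ℂ] H, P * (P * y) = P * y := by
    intro y; rw [← mul_assoc, hp]
  have hmp' : ∀ (j : Fin m) (y : H →L[ℂ] H), P * (M j * (P * y)) = M j * (P * y) := by
    intro j y
    calc P * (M j * (P * y)) = P * (M j * P) * y := by rw [mul_assoc, mul_assoc]
      _ = M j * P * y := by rw [hmp]
      _ = M j * (P * y) := by rw [mul_assoc]
  -- compactness helpers
  have compL : ∀ (G : H →L[ℂ] H) {A : H →L[ℂ] H},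
      IsCompactOperator ⇑A → IsCompactOperator ⇑(G ∘L A) := by
    intro G A hA
    rw [coe_comp']
    exact hA.clm_comp G
  have compR : ∀ (G : H →L[ℂ] H) {A : H →L[ℂ] H},
      IsCompactOperator ⇑A → IsCompactOperator ⇑(A ∘L G) := by
    intro G A hA
    rw [coe_comp']
    exact hA.comp_clm G
  have compSub : ∀ {A B : H →L[ℂ] H},
      IsCompactOperator ⇑A → IsCompactOperator ⇑B → IsCompactOperator ⇑(A - B) := by
    intro A B hA hB
    rw [coe_sub']
    exact hA.sub hB
  have compNeg : ∀ {A : H →L[ℂ] H},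
      IsCompactOperator ⇑A → IsCompactOperator ⇑(-A) := by
    intro A hA
    rw [coe_neg']
    exact hA.neg
  have compAdj : ∀ {A : H →L[ℂ] H},
      IsCompactOperator ⇑A → IsCompactOperator ⇑(ContinuousLinearMap.adjoint A) := by
    intro A hA
    refine aux_compact (X := ContinuousLinearMap.adjoint A) ?_
    rw [adjoint_adjoint]
    exact compR _ hA
  -- key operator identities
  have e43 : ∀ j : Fin m, M j ∘L P - P ∘L M j = -(P ∘L M j ∘L Q) := by
    intro j
    show M j * P - P * M j = -(P * M j * Q)
    simp only [hQ, mul_sub, sub_mul, mul_one, one_mul, mul_assoc, hp, hp', hmp, hmp']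
    abel
  have e45 : ∀ j : Fin m, M j ∘L Q - Q ∘L M j = P ∘L M j ∘L Q := by
    intro j
    show M j * Q - Q * M j = P * M j * Q
    simp only [hQ, mul_sub, sub_mul, mul_one, one_mul, mul_assoc, hp, hp', hmp, hmp']
    abel
  have e46 : ∀ j : Fin m,
      Q ∘L ContinuousLinearMap.adjoint (M j) ∘L P
        = ContinuousLinearMap.adjoint (P ∘L M j ∘L Q) := by
    intro j
    rw [adjoint_comp, adjoint_comp, hQadj, hPadj]
    rfl
  have eI1 : ∀ j k : Fin m,
      P ∘L M j ∘L P ∘L ContinuousLinearMap.adjoint (M k) ∘L P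
          - P ∘L ContinuousLinearMap.adjoint (M k) ∘L P ∘L M j ∘L P
        = P ∘L (M j ∘L ContinuousLinearMap.adjoint (M k)
            - ContinuousLinearMap.adjoint (M k) ∘L M j) ∘L P
          - (P ∘L M j ∘L Q) ∘L (Q ∘L ContinuousLinearMap.adjoint (M k) ∘L P) := by
    intro j k
    set N := ContinuousLinearMap.adjoint (M k)
    show P * M j * P * N * P - P * N * P * M j * P
        = P * (M j * N - N * M j) * P - P * M j * Q * (Q * N * P)
    simp only [hQ, mul_sub, sub_mul, mul_one, one_mul, mul_assoc, hp, hp', hmp, hmp']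
    abel
  have eI2 : ∀ j k : Fin m,
      Q ∘L M j ∘L Q ∘L ContinuousLinearMap.adjoint (M k) ∘L Q
          - Q ∘L ContinuousLinearMap.adjoint (M k) ∘L Q ∘L M j ∘L Q
        = Q ∘L (M j ∘L ContinuousLinearMap.adjoint (M k)
            - ContinuousLinearMap.adjoint (M k) ∘L M j) ∘L Q
          + (Q ∘L ContinuousLinearMap.adjoint (M k) ∘L P) ∘L (P ∘L M j ∘L Q) := by
    intro j k
    set N := ContinuousLinearMap.adjoint (M k)
    show Q * M j * Q * N * Q - Q * N * Q * M j * Q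
        = Q * (M j * N - N * M j) * Q + Q * N * P * (P * M j * Q)
    simp only [hQ, mul_sub, sub_mul, mul_one, one_mul, mul_assoc, hp, hp', hmp, hmp']
    abel
  tfae_have 4 → 3
  | h, j => by
    rw [e43 j]
    exact compNeg (h j)
  tfae_have 3 → 4
  | h, j => by
    have : P ∘L M j ∘L Q = -(M j ∘L P - P ∘L M j) := by rw [e43 j, neg_neg]
    rw [this]
    exact compNeg (h j)
  tfae_have 4 → 5
  | h, j => by
    rw [e45 j]
    exact h j
  tfae_have 5 → 4
  | h, j => by
    rw [← e45 j]
    exact h j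
  tfae_have 4 → 6
  | h, j => by
    rw [e46 j]
    exact compAdj (h j)
  tfae_have 6 → 4
  | h, j => by
    have : P ∘L M j ∘L Q
        = ContinuousLinearMap.adjoint (Q ∘L ContinuousLinearMap.adjoint (M j) ∘L P) := by
      rw [e46 j, adjoint_adjoint]
    rw [this]
    exact compAdj (h j)
  tfae_have 4 → 1
  | h, j, k => by
    rw [eI1 j k]
    exact compSub (compL P (compR P (hM j k))) (compR _ (h j))
  tfae_have 1 → 4
  | h, j => by
    have hBB : IsCompactOperator
        ⇑((P ∘L M j ∘L Q) ∘L (Q ∘L ContinuousLinearMap.adjoint (M j) ∘L P)) := by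
      have : (P ∘L M j ∘L Q) ∘L (Q ∘L ContinuousLinearMap.adjoint (M j) ∘L P)
          = P ∘L (M j ∘L ContinuousLinearMap.adjoint (M j)
              - ContinuousLinearMap.adjoint (M j) ∘L M j) ∘L P
            - (P ∘L M j ∘L P ∘L ContinuousLinearMap.adjoint (M j) ∘L P
              - P ∘L ContinuousLinearMap.adjoint (M j) ∘L P ∘L M j ∘L P) := by
        rw [eI1 j j]; abel
      rw [this]
      exact compSub (compL P (compR P (hM j j))) (h j j)
    have hadj : IsCompactOperator
        ⇑(ContinuousLinearMap.adjoint (P ∘L M j ∘L Q)) := by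
      refine aux_compact (X := ContinuousLinearMap.adjoint (P ∘L M j ∘L Q)) ?_
      rw [adjoint_adjoint, ← e46 j]
      exact hBB
    have := compAdj hadj
    rwa [adjoint_adjoint] at this
  tfae_have 4 → 2
  | h, j, k => by
    rw [eI2 j k]
    have h1 : IsCompactOperator
        ⇑(Q ∘L (M j ∘L ContinuousLinearMap.adjoint (M k)
            - ContinuousLinearMap.adjoint (M k) ∘L M j) ∘L Q) :=
      compL Q (compR Q (hM j k))
    have h2 : IsCompactOperator
        ⇑((Q ∘L ContinuousLinearMap.adjoint (M k) ∘L P) ∘L (P ∘L M j ∘L Q)) :=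
      compL _ (h j)
    rw [coe_add' ]
    exact h1.add h2
  tfae_have 2 → 4
  | h, j => by
    refine aux_compact (X := P ∘L M j ∘L Q) ?_
    have : ContinuousLinearMap.adjoint (P ∘L M j ∘L Q) ∘L (P ∘L M j ∘L Q)
        = (Q ∘L M j ∘L Q ∘L ContinuousLinearMap.adjoint (M j) ∘L Q
            - Q ∘L ContinuousLinearMap.adjoint (M j) ∘L Q ∘L M j ∘L Q)
          - Q ∘L (M j ∘L ContinuousLinearMap.adjoint (M j)
              - ContinuousLinearMap.adjoint (M j) ∘L M j) ∘L Q := by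
      rw [eI2 j j, ← e46 j]; abel
    rw [this]
    exact compSub (h j j) (compL Q (compR Q (hM j j)))
  tfae_finish
end
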